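/- (Delta System Lemma, countable case with fixed cardinality) Every infinite family of pairwise distinct finite subsets of a set Γ, all of the same finite cardinality k, contains an infinite subfamily (A_j)_{j≥1} and a finite set Δ ⊆ Γ such that A_i ∩ A_j = Δ for all i ≠ j, and |Δ| ≤ k − 1. -/

import Mathlib

theorem aux_delta (k : ℕ) : ∀ (Γ : Type*) [DecidableEq Γ] (𝒜 : Set (Finset Γ)),
    𝒜.Infinite → (∀ A ∈ 𝒜, A.card = k) →
    ∃ A : ℕ → Finset Γ, Function.Injective A ∧ (∀ j, A j ∈ 𝒜) ∧
      ∃ Δ : Finset Γ, ∀ i j, i ≠ j → A i ∩ A j = Δ := by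
  induction k with
  | zero =>
    intro Γ _ 𝒜 hinf hcard
    exact absurd (Set.Finite.subset (Set.finite_singleton ∅)
      (fun A hA => by simpa using Finset.card_eq_zero.mp (hcard A hA))) hinf
  | succ k ih =>
    intro Γ _ 𝒜 hinf hcard
    by_cases hx : ∃ x, {A ∈ 𝒜 | x ∈ A}.Infinite
    · obtain ⟨x, hx⟩ := hx
      set S := {A ∈ 𝒜 | x ∈ A} with hS
      have hinj : Set.InjOn (fun A : Finset Γ => A.erase x) S := by
        intro A hA B hB h
        have := congrArg (insert x) h
        simpa [Finset.insert_erase hA.2, Finset.insert_erase hB.2] using this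
      have hBinf : ((fun A : Finset Γ => A.erase x) '' S).Infinite := hx.image hinj
      have hBcard : ∀ B ∈ (fun A : Finset Γ => A.erase x) '' S, B.card = k := by
        rintro B ⟨A, hA, rfl⟩
        rw [Finset.card_erase_of_mem hA.2, hcard A hA.1]
        rfl
      obtain ⟨B, Binj, Bmem, Δ', hΔ'⟩ := ih Γ _ hBinf hBcard
      have hxB : ∀ j, x ∉ B j := fun j => by
        obtain ⟨A, hA, hAe⟩ := Bmem j
        rw [← hAe]; exact Finset.notMem_erase x A
      refine ⟨fun j => insert x (B j), ?_, ?_, insert x Δ', ?_⟩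
      · intro i j h
        apply Binj
        have h2 : (insert x (B i)).erase x = (insert x (B j)).erase x := by
          simp only at h; rw [h]
        rwa [Finset.erase_insert (hxB i), Finset.erase_insert (hxB j)] at h2
      · intro j
        obtain ⟨A, hA, hAe⟩ := Bmem j
        have h2 : insert x (B j) = A := by rw [← hAe, Finset.insert_erase hA.2]
        show insert x (B j) ∈ 𝒜
        rw [h2]; exact hA.1
      · intro i j hij
        have := hΔ' i j hij
        ext a
        by_cases h : a = x
        · simp [h]
        · simp only [Finset.mem_inter, Finset.mem_insert, h, false_or]
          rw [← Finset.mem_inter, this]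
    · push_neg at hx
      have key : ∀ S : Finset Γ, {A ∈ 𝒜 | Disjoint A S}.Infinite := by
        intro S
        have hfin : {A ∈ 𝒜 | ¬ Disjoint A S}.Finite := by
          have hsub : {A ∈ 𝒜 | ¬ Disjoint A S} ⊆ ⋃ x ∈ S, {A ∈ 𝒜 | x ∈ A} := by
            rintro A ⟨hA, hnd⟩
            rw [Finset.not_disjoint_iff] at hnd
            obtain ⟨a, haA, haS⟩ := hnd
            exact Set.mem_biUnion haS ⟨hA, haA⟩
          exact Set.Finite.subset (Set.Finite.biUnion S.finite_toSet
            (fun x _ => hx x)) hsub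
        have hsub2 : 𝒜 \ {A ∈ 𝒜 | ¬ Disjoint A S} ⊆ {A ∈ 𝒜 | Disjoint A S} := by
          rintro A ⟨hA, hA2⟩
          refine ⟨hA, ?_⟩
          by_contra hc
          exact hA2 ⟨hA, hc⟩
        exact Set.Infinite.mono hsub2 (hinf.diff hfin)
      have hne : ∀ S : Finset Γ, ∃ A, A ∈ 𝒜 ∧ Disjoint A S := fun S => (key S).nonempty
      choose f hf1 hf2 using hne
      let g : ℕ → Finset Γ × Finset Γ := fun n =>
        Nat.rec (f ∅, f ∅) (fun _ p => (f p.2, p.2 ∪ f p.2)) n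
      have gmem : ∀ n, (g n).1 ∈ 𝒜 := by
        intro n
        cases n with
        | zero => exact hf1 ∅
        | succ m => exact hf1 _
      have gsub1 : ∀ n, (g n).1 ⊆ (g n).2 := by
        intro n
        cases n with
        | zero => exact subset_rfl
        | succ m => exact Finset.subset_union_right
      have gsub2 : ∀ n, (g n).2 ⊆ (g (n + 1)).2 := fun n => Finset.subset_union_left
      have gmono : ∀ i n, i ≤ n → (g i).2 ⊆ (g n).2 := by
        intro i n hin
        induction n with
        | zero => simp_all
        | succ m ihm =>
          rcases Nat.le_succ_iff.mp hin with h | h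
          · exact (ihm h).trans (gsub2 m)
          · rw [h]
        -- done
      have gdisj : ∀ i j, i < j → Disjoint ((g j).1) ((g i).1) := by
        intro i j hij
        obtain ⟨m, rfl⟩ := Nat.exists_eq_add_of_lt hij
        have h1 : Disjoint ((g (i + m + 1)).1) ((g (i + m)).2) := hf2 _
        exact h1.mono_right ((gsub1 i).trans (gmono i (i + m) (Nat.le_add_right i m)))
      have hint : ∀ i j, i ≠ j → (g i).1 ∩ (g j).1 = ∅ := by
        intro i j hij
        rcases Nat.lt_or_ge i j with h | h
        · exact Finset.disjoint_iff_inter_eq_empty.mp (gdisj i j h).symm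
        · exact Finset.disjoint_iff_inter_eq_empty.mp (gdisj j i (lt_of_le_of_ne h (Ne.symm hij)))
      refine ⟨fun n => (g n).1, ?_, gmem, ∅, hint⟩
      intro i j h
      simp only at h
      by_contra hij
      have h0 : (g i).1 ∩ (g j).1 = ∅ := hint i j hij
      rw [h, Finset.inter_self] at h0
      have := hcard _ (gmem j)
      rw [h0] at this
      simp at this

/-- Delta System Lemma, countable case with fixed cardinality: every infinite
family of finite subsets of `Γ`, all of cardinality `k`, contains an infinite
subfamily forming a delta system whose root `Δ` has `|Δ| ≤ k - 1`. -/
theorem stmt_9 (Γ : Type*) [DecidableEq Γ] (k : ℕ) (𝒜 : Set (Finset Γ)) (h𝒜 : 𝒜.Infinite)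
    (hcard : ∀ A ∈ 𝒜, A.card = k) :
    ∃ A : ℕ → Finset Γ, Function.Injective A ∧ (∀ j, A j ∈ 𝒜) ∧
      ∃ Δ : Finset Γ, (∀ i j, i ≠ j → A i ∩ A j = Δ) ∧ Δ.card ≤ k - 1 := by
  obtain ⟨A, hinj, hmem, Δ, hΔ⟩ := aux_delta k Γ 𝒜 h𝒜 hcard
  refine ⟨A, hinj, hmem, Δ, hΔ, ?_⟩
  have h01 : A 0 ∩ A 1 = Δ := hΔ 0 1 (by norm_num)
  have hsub : Δ ⊆ A 0 := h01 ▸ Finset.inter_subset_left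
  have hne : Δ ≠ A 0 := by
    intro hΔA
    have hsub2 : A 0 ⊆ A 1 := by
      rw [← hΔA]; exact h01 ▸ Finset.inter_subset_right
    have : A 0 = A 1 := Finset.eq_of_subset_of_card_le hsub2
      (by rw [hcard _ (hmem 1), hcard _ (hmem 0)])
    exact absurd (hinj this) (by norm_num)
  have : Δ.card < k := by
    rw [← hcard _ (hmem 0)]
    exact Finset.card_lt_card (hsub.ssubset_of_ne hne)
  omega
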